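/- Let c be a monotonic cost function. If B obeys c and A = Γ^B via a Turing reduction Γ in which every oracle query on input x is at most x (A ≤_ibT B), then A obeys c. -/

import Mathlib

/-- A cost function: computable and nonnegative. -/
def IsCostFunction (c : ℕ → ℕ → ℚ) : Prop :=
  Computable₂ c ∧ ∀ x s, 0 ≤ c x s

/-- The cost of the change from stage `s-1` to stage `s`: `c x s` for the least
`x < s` that changes, and `0` if there is no such `x`. -/
def stageCost (c : ℕ → ℕ → ℚ) (A : ℕ → ℕ → Bool) (s : ℕ) : ℚ :=
  if h : ∃ x, x < s ∧ A (s - 1) x ≠ A s x then c (Nat.find h) s else 0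

/-- `A` is a computable approximation of the set `L`: a computable sequence of
finite sets converging pointwise to `L`. -/
def IsCompApprox (A : ℕ → ℕ → Bool) (L : ℕ → Bool) : Prop :=
  Computable₂ A ∧ (∀ s, Set.Finite {x | A s x = true}) ∧
    ∀ x, ∃ N, ∀ s, N ≤ s → A s x = L x

/-- The total cost of the approximation `A` is bounded by `q`. -/
def ObeysWith (c : ℕ → ℕ → ℚ) (A : ℕ → ℕ → Bool) (q : ℚ) : Prop :=
  ∀ n, ∑ s ∈ Finset.range n, stageCost c A s ≤ q

/-- A (Δ⁰₂) set `L` obeys the cost function `c`. -/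
def Obeys (c : ℕ → ℕ → ℚ) (L : ℕ → Bool) : Prop :=
  ∃ A, IsCompApprox A L ∧ ∃ q, ObeysWith c A q

/-- Monotonic: non-increasing in the main argument, zero for `x > s`,
non-decreasing in the stage. -/
def MonotonicCF (c : ℕ → ℕ → ℚ) : Prop :=
  (∀ x s, c (x + 1) s ≤ c x s) ∧ (∀ x s, s < x → c x s = 0) ∧
    ∀ x s, c x s ≤ c x (s + 1)

/-- The limit condition: `lim_x liminf_s c(x,s) = 0`. -/
def LimitCondition (c : ℕ → ℕ → ℚ) : Prop :=
  ∀ e : ℕ, ∃ x0, ∀ x, x0 ≤ x → ∀ t, ∃ s, t ≤ s ∧ c x s ≤ ((2 : ℚ) ^ e)⁻¹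

/-- `L` is computably enumerable. -/
def CEset (L : ℕ → Bool) : Prop :=
  ∃ f : ℕ →. Unit, Partrec f ∧ ∀ x, (f x).Dom ↔ L x = true
theorem stmt10 (c : ℕ → ℕ → ℚ) (hc : IsCostFunction c) (hm : MonotonicCF c)
    (A B : ℕ → Bool) (hB : Obeys c B)
    (F : List Bool × ℕ → Bool) (hF : Computable F)
    (hred : ∀ x, F ((List.range (x + 1)).map B, x) = A x) :
    Obeys c A := by
  obtain ⟨B1, ⟨hBcomp, hBfin, hBlim⟩, q, hq⟩ := hB
  set A2 : ℕ → ℕ → Bool := fun s x =>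
    if x ≤ s then F ((List.range (x + 1)).map (B1 s), x) else false with hA2
  -- monotone in first argument
  have cmono : ∀ a b s, a ≤ b → c b s ≤ c a s := by
    intro a b s h
    induction h with
    | refl => exact le_refl _
    | step h ih => exact le_trans (hm.1 _ _) ih
  have key : ∀ s, stageCost c A2 s ≤ stageCost c B1 s := by
    intro s
    unfold stageCost
    split
    · rename_i hA
      set xA := Nat.find hA with hxA
      obtain ⟨hxAs, hxAne⟩ := Nat.find_spec hA
      have hle1 : xA ≤ s - 1 := Nat.le_sub_one_of_lt hxAs
      have hle2 : xA ≤ s := le_of_lt hxAs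
      have hlists : (List.range (xA + 1)).map (B1 (s - 1)) ≠
          (List.range (xA + 1)).map (B1 s) := by
        intro heq
        apply hxAne
        simp only [hA2, ← hxA, if_pos hle1, if_pos hle2, heq]
      have hBy : ∃ y, y < s ∧ B1 (s - 1) y ≠ B1 s y := by
        by_contra hcon
        push_neg at hcon
        apply hlists
        apply List.map_congr_left
        intro y hy
        rw [List.mem_range] at hy
        exact hcon y (lt_of_lt_of_le hy (Nat.succ_le_of_lt hxAs))
      rw [dif_pos hBy]
      have hyle : Nat.find hBy ≤ xA := by
        by_contra hcon
        push_neg at hcon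
        rw [Nat.lt_find_iff] at hcon
        apply hlists
        apply List.map_congr_left
        intro y hy
        rw [List.mem_range] at hy
        by_contra hne
        exact hcon y (Nat.lt_succ_iff.mp hy)
          ⟨lt_of_lt_of_le hy (Nat.succ_le_of_lt hxAs), hne⟩
      exact cmono _ _ _ hyle
    · split
      · exact hc.2 _ _
      · exact le_refl 0
  refine ⟨A2, ⟨?_, ?_, ?_⟩, q, fun n => le_trans (Finset.sum_le_sum fun s _ => key s) (hq n)⟩
  · -- computability
    have hlist : Computable (fun p : ℕ × ℕ => (List.range (p.2 + 1)).map (B1 p.1)) := by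
      have := Computable.nat_rec (f := fun p : ℕ × ℕ => p.2 + 1)
        (g := fun _ : ℕ × ℕ => ([] : List Bool))
        (h := fun (p : ℕ × ℕ) (nl : ℕ × List Bool) => nl.2 ++ [B1 p.1 nl.1])
        (Computable.succ.comp Computable.snd) (Computable.const [])
        ((Primrec.list_concat.to_comp.comp
            (Computable.snd.comp Computable.snd)
            (hBcomp.comp (Computable.fst.comp Computable.fst)
              (Computable.fst.comp Computable.snd))).to₂)
      have haux : ∀ s n, (Nat.rec [] (fun y IH => IH ++ [B1 s y]) n : List Bool) =
          List.map (B1 s) (List.range n) := by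
        intro s n
        induction n with
        | zero => simp
        | succ n ih => simp [List.range_succ, ih]
      refine this.of_eq fun p => ?_
      simpa using haux p.1 (p.2 + 1)
    have : Computable (fun p : ℕ × ℕ =>
        F ((List.range (p.2 + 1)).map (B1 p.1), p.2)) :=
      hF.comp (hlist.pair Computable.snd)
    refine Computable₂.mk ((Computable.cond
      (Primrec.to_comp (Primrec.nat_le.comp (Primrec.snd) (Primrec.fst)).decide)
      this (Computable.const false)).of_eq fun p => ?_)
    simp only [hA2]
    by_cases h : p.2 ≤ p.1 <;> simp [h]
  · intro s
    apply Set.Finite.subset (Set.finite_Iic s)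
    intro x hx
    simp only [hA2, Set.mem_setOf_eq] at hx
    by_contra hxs
    simp only [Set.mem_Iic, not_le] at hxs
    rw [if_neg (by omega)] at hx
    exact Bool.false_ne_true hx
  · intro x
    choose N hN using hBlim
    refine ⟨max x ((Finset.range (x + 1)).sup N), fun s hs => ?_⟩
    have hxs : x ≤ s := le_trans (le_max_left _ _) hs
    have hmap : (List.range (x + 1)).map (B1 s) = (List.range (x + 1)).map B := by
      apply List.map_congr_left
      intro y hy
      rw [List.mem_range] at hy
      apply hN
      calc N y ≤ (Finset.range (x + 1)).sup N := Finset.le_sup (Finset.mem_range.mpr hy)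
        _ ≤ s := le_trans (le_max_right _ _) hs
    simp only [hA2, if_pos hxs, hmap, hred]
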